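/- Let Φ be a root system of type ADE (simply-laced) of rank d ≥ 2 in ℝ^d, let L ⊆ ℂ^d be a 2-dimensional ℂ-linear subspace with L ⊄ ker θ_ℂ for every θ ∈ Φ, and let Φ = Φ_1 ⊔ ⋯ ⊔ Φ_s be the L-induced decomposition. Then 2d − 1 ≤ Σ_{k=1}^s rank Φ_k ≤ (1/2)·#Φ, where rank Φ_k := dim_ℝ span_ℝ Φ_k. -/
import Mathlib


noncomputable section

/-- The standard inner product on `ℝ^d`. -/
def dotR {d : ℕ} (x y : Fin d → ℝ) : ℝ := ∑ i, x i * y i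

/-- `Φ` is a root system in `ℝ^d`: a finite set of nonzero vectors spanning `ℝ^d`,
closed under the reflections `s_α`, with integral Cartan numbers. -/
def IsRootSystem {d : ℕ} (Φ : Finset (Fin d → ℝ)) : Prop :=
  (∀ α ∈ Φ, α ≠ 0) ∧
  Submodule.span ℝ (Φ : Set (Fin d → ℝ)) = ⊤ ∧
  (∀ α ∈ Φ, ∀ β ∈ Φ, β - (2 * dotR β α / dotR α α) • α ∈ Φ) ∧
  (∀ α ∈ Φ, ∀ β ∈ Φ, ∃ n : ℤ, 2 * dotR β α / dotR α α = (n : ℝ))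

/-- `Φ` is reduced: the only multiples of a root `α` in `Φ` are `±α`. -/
def IsReducedRS {d : ℕ} (Φ : Finset (Fin d → ℝ)) : Prop :=
  ∀ α ∈ Φ, ∀ t : ℝ, t • α ∈ Φ → t = 1 ∨ t = -1

/-- `Φ` is irreducible: it is not the disjoint union of two nonempty mutually
orthogonal subsets. -/
def IsIrreducibleRS {d : ℕ} (Φ : Finset (Fin d → ℝ)) : Prop :=
  ∀ A B : Set (Fin d → ℝ), (Φ : Set (Fin d → ℝ)) = A ∪ B → Disjoint A B →
    (∀ a ∈ A, ∀ b ∈ B, dotR a b = 0) → A = ∅ ∨ B = ∅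

/-- The complexification `θ_ℂ : ℂ^d → ℂ` of the linear functional `z ↦ Σ θᵢ zᵢ`. -/
def thetaC {d : ℕ} (θ : Fin d → ℝ) (z : Fin d → ℂ) : ℂ := ∑ i, (θ i : ℂ) * z i

/-- The kernel of `θ_ℂ`, as a complex subspace of `ℂ^d`. -/
def kerC {d : ℕ} (θ : Fin d → ℝ) : Submodule ℂ (Fin d → ℂ) where
  carrier := {z | thetaC θ z = 0}
  add_mem' := by
    intro a b ha hb
    simp only [Set.mem_setOf_eq, thetaC] at *
    simp [Pi.add_apply, mul_add, Finset.sum_add_distrib, ha, hb]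
  zero_mem' := by simp [thetaC]
  smul_mem' := by
    intro c z hz
    simp only [Set.mem_setOf_eq, thetaC] at *
    have h : ∑ i, (θ i : ℂ) * (c • z) i = c * ∑ i, (θ i : ℂ) * z i := by
      rw [Finset.mul_sum]
      exact Finset.sum_congr rfl (fun i _ => by simp [Pi.smul_apply, smul_eq_mul]; ring)
    rw [h, hz, mul_zero]


open Module Submodule

namespace Stmt14Aux

variable {d : ℕ}

lemma dotR_comm (x y : Fin d → ℝ) : dotR x y = dotR y x :=
  Finset.sum_congr rfl fun i _ => mul_comm _ _

lemma dotR_self_eq_zero {x : Fin d → ℝ} (h : dotR x x = 0) : x = 0 := by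
  funext i
  have hnn : ∀ j ∈ (Finset.univ : Finset (Fin d)), 0 ≤ x j * x j := fun j _ => mul_self_nonneg _
  have := (Finset.sum_eq_zero_iff_of_nonneg hnn).mp h i (Finset.mem_univ i)
  exact mul_self_eq_zero.mp this

lemma dotR_self_ne_zero {x : Fin d → ℝ} (h : x ≠ 0) : dotR x x ≠ 0 :=
  fun hc => h (dotR_self_eq_zero hc)

lemma dotR_sub_smul (x y z : Fin d → ℝ) (n : ℝ) :
    dotR (x - n • y) z = dotR x z - n * dotR y z := by
  simp only [dotR, Pi.sub_apply, Pi.smul_apply, smul_eq_mul, sub_mul,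
    Finset.sum_sub_distrib, Finset.mul_sum, mul_assoc]

/-- the linear functional `x ↦ dotR x w`. -/
def dotL (w : Fin d → ℝ) : (Fin d → ℝ) →ₗ[ℝ] ℝ where
  toFun x := dotR x w
  map_add' x y := by
    simp [dotR, Pi.add_apply, add_mul, Finset.sum_add_distrib]
  map_smul' c x := by
    simp only [dotR, Pi.smul_apply, smul_eq_mul, RingHom.id_apply, Finset.mul_sum, mul_assoc]

lemma dotL_apply (w x : Fin d → ℝ) : dotL w x = dotR x w := rfl

/-- `thetaC θ` as a linear map. -/
def thetaL (θ : Fin d → ℝ) : (Fin d → ℂ) →ₗ[ℂ] ℂ where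
  toFun := thetaC θ
  map_add' a b := by
    simp [thetaC, Pi.add_apply, mul_add, Finset.sum_add_distrib]
  map_smul' c z := by
    simp only [thetaC, Pi.smul_apply, smul_eq_mul, RingHom.id_apply, Finset.mul_sum]
    exact Finset.sum_congr rfl fun i _ => by ring

lemma thetaL_apply (θ : Fin d → ℝ) (z : Fin d → ℂ) : thetaL θ z = thetaC θ z := rfl

lemma kerC_eq (θ : Fin d → ℝ) : kerC θ = LinearMap.ker (thetaL θ) := rfl

lemma thetaC_sub_smul (θ η : Fin d → ℝ) (n : ℝ) (z : Fin d → ℂ) :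
    thetaC (θ - n • η) z = thetaC θ z - (n : ℂ) * thetaC η z := by
  simp only [thetaC, Pi.sub_apply, Pi.smul_apply, smul_eq_mul, Finset.mul_sum]
  rw [← Finset.sum_sub_distrib]
  exact Finset.sum_congr rfl fun i _ => by push_cast; ring

lemma thetaC_neg (θ : Fin d → ℝ) (z : Fin d → ℂ) : thetaC (-θ) z = - thetaC θ z := by
  simp only [thetaC, Pi.neg_apply, ← Finset.sum_neg_distrib]
  exact Finset.sum_congr rfl fun i _ => by push_cast; ring

lemma thetaC_smul (t : ℝ) (θ : Fin d → ℝ) (z : Fin d → ℂ) :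
    thetaC (t • θ) z = (t : ℂ) * thetaC θ z := by
  simp only [thetaC, Pi.smul_apply, smul_eq_mul, Finset.mul_sum]
  exact Finset.sum_congr rfl fun i _ => by push_cast; ring

lemma mem_kerC {θ : Fin d → ℝ} {z : Fin d → ℂ} : z ∈ kerC θ ↔ thetaC θ z = 0 := Iff.rfl

lemma kerC_neg (θ : Fin d → ℝ) : kerC (-θ) = kerC θ := by
  ext z; simp [mem_kerC, thetaC_neg]

lemma kerC_smul {t : ℝ} (ht : t ≠ 0) (θ : Fin d → ℝ) : kerC (t • θ) = kerC θ := by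
  ext z
  simp only [mem_kerC, thetaC_smul]
  constructor
  · intro h
    rcases mul_eq_zero.mp h with h | h
    · exact absurd (by exact_mod_cast h) ht
    · exact h
  · intro h; rw [h, mul_zero]

variable {L : Submodule ℂ (Fin d → ℂ)}


/-- K1: the fiber line is 1-dimensional. -/
lemma finrank_inf_eq_one (hL : finrank ℂ L = 2) {θ : Fin d → ℝ} (hθk : ¬ L ≤ kerC θ) :
    finrank ℂ ↥(kerC θ ⊓ L) = 1 := by
  set f : ↥L →ₗ[ℂ] ℂ := (thetaL θ).comp L.subtype with hf
  have hker : LinearMap.ker f = comap L.subtype (kerC θ) := by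
    rw [hf, LinearMap.ker_comp, kerC_eq]
  have hmap : map L.subtype (LinearMap.ker f) = kerC θ ⊓ L := by
    rw [hker]
    rw [Submodule.map_comap_subtype, inf_comm]
  have h1 : finrank ℂ ↥(kerC θ ⊓ L) = finrank ℂ ↥(LinearMap.ker f) := by
    rw [← hmap, Submodule.finrank_map_subtype_eq]
  have hrn : finrank ℂ ↥(LinearMap.range f) + finrank ℂ ↥(LinearMap.ker f) = 2 := by
    rw [LinearMap.finrank_range_add_finrank_ker f, hL]
  have hrange : finrank ℂ ↥(LinearMap.range f) = 1 := by
    have hle : finrank ℂ ↥(LinearMap.range f) ≤ 1 := by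
      have := Submodule.finrank_le (LinearMap.range f)
      simpa using this
    have hne : LinearMap.range f ≠ ⊥ := by
      intro hbot
      apply hθk
      intro z hz
      have : f ⟨z, hz⟩ = 0 := by
        have : f ⟨z, hz⟩ ∈ LinearMap.range f := LinearMap.mem_range_self _ _
        rw [hbot] at this
        simpa using this
      have : thetaC θ z = 0 := by
        rw [hf] at this
        simpa [thetaL_apply] using this
      exact mem_kerC.mpr this
    have hpos : 0 < finrank ℂ ↥(LinearMap.range f) := by
      rcases Nat.eq_zero_or_pos (finrank ℂ ↥(LinearMap.range f)) with h | h
      · exact absurd (Submodule.finrank_eq_zero.mp h) hne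
      · exact h
    omega
  omega

lemma fiber_eq_of_le (hL : finrank ℂ L = 2) {θ η : Fin d → ℝ}
    (hθ : ¬ L ≤ kerC θ) (hη : ¬ L ≤ kerC η)
    (hle : kerC θ ⊓ L ≤ kerC η) : kerC θ ⊓ L = kerC η ⊓ L := by
  have h1 := finrank_inf_eq_one hL hθ
  have h2 := finrank_inf_eq_one hL hη
  have hle2 : kerC θ ⊓ L ≤ kerC η ⊓ L := le_inf hle inf_le_right
  exact Submodule.eq_of_le_of_finrank_le hle2 (by omega)

/-- (B): same fiber is preserved under root-string combinations. -/
lemma fiber_sub_smul_same (hL : finrank ℂ L = 2) {θ η : Fin d → ℝ} (n : ℝ)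
    (hθ : ¬ L ≤ kerC θ) (hη : ¬ L ≤ kerC η) (hζ : ¬ L ≤ kerC (θ - n • η))
    (heq : kerC θ ⊓ L = kerC η ⊓ L) :
    kerC (θ - n • η) ⊓ L = kerC θ ⊓ L := by
  symm
  apply fiber_eq_of_le hL hθ hζ
  intro z hz
  have hzθ : thetaC θ z = 0 := mem_kerC.mp hz.1
  have hzη : thetaC η z = 0 := mem_kerC.mp (heq ▸ hz : z ∈ kerC η ⊓ L).1
  exact mem_kerC.mpr (by rw [thetaC_sub_smul, hzθ, hzη]; ring)

/-- (C): cross-fiber combinations land in a third fiber. -/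
lemma fiber_sub_smul_cross (hL : finrank ℂ L = 2) {θ η : Fin d → ℝ} {n : ℝ} (hn : n ≠ 0)
    (hθ : ¬ L ≤ kerC θ) (hη : ¬ L ≤ kerC η) (hζ : ¬ L ≤ kerC (θ - n • η))
    (hne : kerC θ ⊓ L ≠ kerC η ⊓ L) :
    kerC (θ - n • η) ⊓ L ≠ kerC θ ⊓ L ∧ kerC (θ - n • η) ⊓ L ≠ kerC η ⊓ L := by
  constructor
  · intro h
    apply hne
    apply fiber_eq_of_le hL hθ hη
    intro z hz
    have hzθ : thetaC θ z = 0 := mem_kerC.mp hz.1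
    have hzζ : thetaC (θ - n • η) z = 0 := mem_kerC.mp (h ▸ hz : z ∈ kerC (θ - n • η) ⊓ L).1
    rw [thetaC_sub_smul, hzθ] at hzζ
    have : (n : ℂ) * thetaC η z = 0 := by linear_combination -hzζ
    rcases mul_eq_zero.mp this with h' | h'
    · exact absurd (by exact_mod_cast h') hn
    · exact mem_kerC.mpr h'
  · intro h
    apply hne
    symm
    apply fiber_eq_of_le hL hη hθ
    intro z hz
    have hzη : thetaC η z = 0 := mem_kerC.mp hz.1
    have hzζ : thetaC (θ - n • η) z = 0 := mem_kerC.mp (h ▸ hz : z ∈ kerC (θ - n • η) ⊓ L).1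
    rw [thetaC_sub_smul, hzη] at hzζ
    exact mem_kerC.mpr (by linear_combination hzζ)



/-- If a nonzero functional vector kills all of Φ, contradiction with spanning. -/
lemma no_common_orth {Φ : Finset (Fin d → ℝ)} (hspan : Submodule.span ℝ (Φ : Set (Fin d → ℝ)) = ⊤)
    {w : Fin d → ℝ} (hw : w ≠ 0) (h : ∀ θ ∈ Φ, dotR θ w = 0) : False := by
  have hker : Submodule.span ℝ (Φ : Set (Fin d → ℝ)) ≤ LinearMap.ker (dotL w) := by
    rw [Submodule.span_le]
    intro x hx
    simp only [SetLike.mem_coe, LinearMap.mem_ker, dotL_apply]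
    exact h x hx
  rw [hspan] at hker
  have : dotL w w = 0 := hker (Submodule.mem_top)
  rw [dotL_apply] at this
  exact dotR_self_ne_zero hw this

/-- If all roots lie in a single 1-dim fiber, contradiction. -/
lemma not_all_same_fiber {Φ : Finset (Fin d → ℝ)}
    (hspan : Submodule.span ℝ (Φ : Set (Fin d → ℝ)) = ⊤)
    {l : Submodule ℂ (Fin d → ℂ)} (hl : finrank ℂ ↥l = 1)
    (hall : ∀ θ ∈ Φ, ∀ z ∈ l, thetaC θ z = 0) : False := by
  have hlne : l ≠ ⊥ := by
    intro hbot
    rw [hbot] at hl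
    simp [finrank_bot] at hl
  obtain ⟨z, hzl, hz0⟩ := Submodule.ne_bot_iff l |>.mp hlne
  set a : Fin d → ℝ := fun i => (z i).re with ha
  set b : Fin d → ℝ := fun i => (z i).im with hb
  have hab : ∀ θ ∈ Φ, dotR θ a = 0 ∧ dotR θ b = 0 := by
    intro θ hθ
    have h0 : thetaC θ z = 0 := hall θ hθ z hzl
    have hre : dotR θ a = (thetaC θ z).re := by
      rw [thetaC, Complex.re_sum, dotR]
      exact Finset.sum_congr rfl fun i _ => by simp [ha, Complex.mul_re]
    have him : dotR θ b = (thetaC θ z).im := by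
      rw [thetaC, Complex.im_sum, dotR]
      exact Finset.sum_congr rfl fun i _ => by simp [hb, Complex.mul_im]
    rw [h0] at hre him
    exact ⟨by simpa using hre, by simpa using him⟩
  have : a ≠ 0 ∨ b ≠ 0 := by
    by_contra hc
    push_neg at hc
    apply hz0
    funext i
    have h1 : (z i).re = 0 := by have := congrFun hc.1 i; simpa [ha] using this
    have h2 : (z i).im = 0 := by have := congrFun hc.2 i; simpa [hb] using this
    exact Complex.ext h1 h2
  rcases this with hw | hw
  · exact no_common_orth hspan hw (fun θ hθ => (hab θ hθ).1)
  · exact no_common_orth hspan hw (fun θ hθ => (hab θ hθ).2)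

/-- negation of a root is a root -/
lemma neg_mem_of_mem {Φ : Finset (Fin d → ℝ)} (hRS : IsRootSystem Φ)
    {θ : Fin d → ℝ} (hθ : θ ∈ Φ) : -θ ∈ Φ := by
  have hne := hRS.1 θ hθ
  have hd := dotR_self_ne_zero hne
  have h := hRS.2.2.1 θ hθ θ hθ
  have hcoef : 2 * dotR θ θ / dotR θ θ = 2 := by field_simp
  rw [hcoef] at h
  have : θ - (2 : ℝ) • θ = -θ := by
    funext i
    simp only [Pi.sub_apply, Pi.smul_apply, smul_eq_mul, Pi.neg_apply]
    ring
  rwa [this] at h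

/-- Upper bound core: a negation-closed finite set of nonzero vectors has
`2 * rank ≤ card`. -/
lemma two_mul_finrank_le_card :
    ∀ (n : ℕ) (S : Finset (Fin d → ℝ)), S.card ≤ n → (0 : Fin d → ℝ) ∉ S →
    (∀ x ∈ S, -x ∈ S) →
    2 * finrank ℝ ↥(Submodule.span ℝ (S : Set (Fin d → ℝ))) ≤ S.card := by
  intro n
  induction n with
  | zero =>
    intro S hcard _ _
    have : S = ∅ := Finset.card_eq_zero.mp (Nat.le_zero.mp hcard)
    subst this
    simp [finrank_bot]
  | succ n ih =>
    intro S hcard h0 hneg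
    rcases Finset.eq_empty_or_nonempty S with rfl | ⟨x, hx⟩
    · simp [finrank_bot]
    · have hxne : x ≠ 0 := fun h => h0 (h ▸ hx)
      have hnx : -x ∈ S := hneg x hx
      have hxnx : -x ≠ x := by
        intro h
        apply hxne
        have : x + x = 0 := by nth_rewrite 1 [← h]; exact neg_add_cancel x
        have h2 : (2 : ℝ) • x = 0 := by
          funext i
          have := congrFun this i
          simp only [Pi.add_apply, Pi.zero_apply] at this
          simp only [Pi.smul_apply, smul_eq_mul, Pi.zero_apply]
          linarith
        have := smul_eq_zero.mp h2
        rcases this with h | h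
        · norm_num at h
        · exact h
      set T := (S.erase x).erase (-x) with hT
      have hnxmem : -x ∈ S.erase x := Finset.mem_erase.mpr ⟨hxnx, hnx⟩
      have hcardT : T.card + 2 = S.card := by
        rw [hT, Finset.card_erase_of_mem hnxmem, Finset.card_erase_of_mem hx]
        have : 1 ≤ S.card := Finset.card_pos.mpr ⟨x, hx⟩
        have : 2 ≤ S.card := by
          have : ({x, -x} : Finset (Fin d → ℝ)) ⊆ S := by
            intro y hy
            rcases Finset.mem_insert.mp hy with rfl | hy
            · exact hx
            · rw [Finset.mem_singleton.mp hy]; exact hnx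
          calc 2 = ({x, -x} : Finset (Fin d → ℝ)).card := by
                rw [Finset.card_insert_of_notMem (by simp [Ne.symm hxnx]), Finset.card_singleton]
            _ ≤ S.card := Finset.card_le_card this
        omega
      have hT0 : (0 : Fin d → ℝ) ∉ T := fun h => h0 (Finset.mem_of_mem_erase (Finset.mem_of_mem_erase h))
      have hTneg : ∀ y ∈ T, -y ∈ T := by
        intro y hy
        have hyS : y ∈ S := Finset.mem_of_mem_erase (Finset.mem_of_mem_erase hy)
        have hy1 : y ≠ -x := (Finset.mem_erase.mp hy).1
        have hy2 : y ≠ x := (Finset.mem_erase.mp (Finset.mem_of_mem_erase hy)).1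
        refine Finset.mem_erase.mpr ⟨?_, Finset.mem_erase.mpr ⟨?_, hneg y hyS⟩⟩
        · intro h; exact hy2 (by rw [← neg_neg y, h, neg_neg])
        · intro h; exact hy1 (by rw [← neg_neg y, h])
      have hspan : Submodule.span ℝ (S : Set (Fin d → ℝ)) ≤
          Submodule.span ℝ (T : Set (Fin d → ℝ)) ⊔ Submodule.span ℝ {x} := by
        rw [Submodule.span_le]
        intro y hy
        simp only [Finset.coe_sort_coe, SetLike.mem_coe] at *
        rcases Finset.mem_coe.mp hy with hyS
        by_cases h1 : y = x
        · subst h1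
          exact Submodule.mem_sup_right (Submodule.subset_span (Set.mem_singleton _))
        by_cases h2 : y = -x
        · apply Submodule.mem_sup_right
          subst h2
          have : x ∈ Submodule.span ℝ ({x} : Set (Fin d → ℝ)) :=
            Submodule.subset_span (Set.mem_singleton _)
          exact Submodule.neg_mem _ this
        · apply Submodule.mem_sup_left
          apply Submodule.subset_span
          exact Finset.mem_coe.mpr (Finset.mem_erase.mpr ⟨h2, Finset.mem_erase.mpr ⟨h1, hyS⟩⟩)
      have hrank : finrank ℝ ↥(Submodule.span ℝ (S : Set (Fin d → ℝ))) ≤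
          finrank ℝ ↥(Submodule.span ℝ (T : Set (Fin d → ℝ))) + 1 := by
      -- finrank sup ≤ sum, singleton has rank 1
        have h1 : finrank ℝ ↥(Submodule.span ℝ (T : Set (Fin d → ℝ)) ⊔ Submodule.span ℝ {x}) ≤
            finrank ℝ ↥(Submodule.span ℝ (T : Set (Fin d → ℝ))) + finrank ℝ ↥(Submodule.span ℝ ({x} : Set (Fin d → ℝ))) := by
          have := Submodule.finrank_sup_add_finrank_inf_eq
            (Submodule.span ℝ (T : Set (Fin d → ℝ))) (Submodule.span ℝ ({x} : Set (Fin d → ℝ)))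
          omega
        have h2 : finrank ℝ ↥(Submodule.span ℝ ({x} : Set (Fin d → ℝ))) = 1 :=
          finrank_span_singleton hxne
        have h3 := Submodule.finrank_mono hspan
        omega
      have ihT := ih T (by omega) hT0 hTneg
      omega


variable {Φ : Finset (Fin d → ℝ)}


def isFam (Φ : Finset (Fin d → ℝ)) (L : Submodule ℂ (Fin d → ℂ)) (k : ℕ)
    (β : Fin k → (Fin d → ℝ)) (prev : Fin k → Fin k) : Prop :=
  (∀ i, β i ∈ Φ) ∧ LinearIndependent ℝ β ∧
  ∀ i : Fin k, 0 < i.val →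
    (prev i).val < i.val ∧ dotR (β i) (β (prev i)) ≠ 0 ∧
    kerC (β i) ⊓ L ≠ kerC (β (prev i)) ⊓ L

lemma partner {k : ℕ} (hk : 2 ≤ k) {β : Fin k → (Fin d → ℝ)} {prev : Fin k → Fin k}
    (hF : isFam Φ L k β prev) (i : Fin k) :
    ∃ j, dotR (β i) (β j) ≠ 0 ∧ kerC (β i) ⊓ L ≠ kerC (β j) ⊓ L := by
  rcases Nat.eq_zero_or_pos i.val with h0 | hpos
  · have h1 : (1:ℕ) < k := by omega
    obtain ⟨hlt, hdot, hcls⟩ := hF.2.2 ⟨1, h1⟩ (by simp)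
    have heq : prev ⟨1, h1⟩ = i := by
      apply Fin.ext
      simp only [Fin.val_mk] at hlt ⊢
      omega
    rw [heq] at hdot hcls
    exact ⟨⟨1, h1⟩, by rwa [dotR_comm], Ne.symm hcls⟩
  · obtain ⟨_, hdot, hcls⟩ := hF.2.2 i hpos
    exact ⟨prev i, hdot, hcls⟩

lemma phi_nonempty (hd : 2 ≤ d) (hRS : IsRootSystem Φ) : Φ.Nonempty := by
  rcases Finset.eq_empty_or_nonempty Φ with rfl | h
  · exfalso
    have hsp := hRS.2.1
    rw [Finset.coe_empty, Submodule.span_empty] at hsp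
    have hmem : (fun _ => (1:ℝ) : Fin d → ℝ) ∈ (⊥ : Submodule ℝ (Fin d → ℝ)) := by
      rw [hsp]; trivial
    rw [Submodule.mem_bot] at hmem
    have := congrFun hmem ⟨0, by omega⟩
    simp at this
  · exact h

lemma exists_cross_pair (hd : 2 ≤ d) (hRS : IsRootSystem Φ) (hirr : IsIrreducibleRS Φ)
    (hL : finrank ℂ L = 2) (hLk : ∀ θ ∈ Φ, ¬ L ≤ kerC θ) :
    ∃ θ ∈ Φ, ∃ η ∈ Φ, dotR θ η ≠ 0 ∧ kerC θ ⊓ L ≠ kerC η ⊓ L := by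
  by_contra hc
  push_neg at hc
  obtain ⟨θ0, hθ0⟩ := phi_nonempty hd hRS
  set A : Set (Fin d → ℝ) := (↑Φ : Set _) ∩ {x | kerC x ⊓ L = kerC θ0 ⊓ L} with hA
  set B : Set (Fin d → ℝ) := (↑Φ : Set _) ∩ {x | kerC x ⊓ L ≠ kerC θ0 ⊓ L} with hB
  have hunion : (↑Φ : Set (Fin d → ℝ)) = A ∪ B := by
    ext x
    simp only [hA, hB, Set.mem_union, Set.mem_inter_iff, Set.mem_setOf_eq]
    constructor
    · intro hx
      by_cases h : kerC x ⊓ L = kerC θ0 ⊓ L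
      · exact Or.inl ⟨hx, h⟩
      · exact Or.inr ⟨hx, h⟩
    · rintro (⟨hx, _⟩ | ⟨hx, _⟩) <;> exact hx
  have hdisj : Disjoint A B := by
    rw [Set.disjoint_left]
    rintro x ⟨_, hx1⟩ ⟨_, hx2⟩
    exact hx2 hx1
  have horth : ∀ a ∈ A, ∀ b ∈ B, dotR a b = 0 := by
    rintro a ⟨haΦ, ha⟩ b ⟨hbΦ, hb⟩
    by_contra hab
    exact hb ((hc a haΦ b hbΦ hab) ▸ ha)
  rcases hirr A B hunion hdisj horth with hA0 | hB0
  · have : θ0 ∈ A := ⟨hθ0, rfl⟩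
    rw [hA0] at this
    exact this
  · -- all roots have the same fiber
    have hall : ∀ θ ∈ Φ, kerC θ ⊓ L = kerC θ0 ⊓ L := by
      intro θ hθ
      by_contra h
      have : θ ∈ B := ⟨hθ, h⟩
      rw [hB0] at this
      exact this
    apply not_all_same_fiber hRS.2.1 (finrank_inf_eq_one hL (hLk θ0 hθ0))
    intro θ hθ z hz
    have : z ∈ kerC θ ⊓ L := (hall θ hθ) ▸ hz
    exact mem_kerC.mp this.1

lemma fam_two (hd : 2 ≤ d) (hRS : IsRootSystem Φ) (hirr : IsIrreducibleRS Φ)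
    (hL : finrank ℂ L = 2) (hLk : ∀ θ ∈ Φ, ¬ L ≤ kerC θ) :
    ∃ (β : Fin 2 → (Fin d → ℝ)) (prev : Fin 2 → Fin 2), isFam Φ L 2 β prev := by
  obtain ⟨θ, hθ, η, hη, hdot, hcls⟩ := exists_cross_pair hd hRS hirr hL hLk
  refine ⟨![θ, η], fun _ => 0, ?_, ?_, ?_⟩
  · intro i
    fin_cases i <;> simpa using (by assumption : _ ∈ Φ)
  · rw [linearIndependent_fin2]
    constructor
    · simpa using hRS.1 η hη
    · intro a ha
      simp only [Matrix.cons_val_one, Matrix.head_cons, Matrix.cons_val_zero] at ha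
      have ha0 : a ≠ 0 := by
        intro h
        rw [h, zero_smul] at ha
        exact hRS.1 θ hθ ha.symm
      apply hcls
      rw [← ha, kerC_smul ha0]
  · intro i hi
    have hi1 : i = 1 := by
      apply Fin.ext
      have := i.isLt
      simp only [Fin.val_one]
      omega
    subst hi1
    refine ⟨by simp, ?_, ?_⟩
    · simpa [Matrix.cons_val_one, Matrix.head_cons, Matrix.cons_val_zero] using
        (by rwa [dotR_comm] at hdot : dotR η θ ≠ 0)
    · simpa [Matrix.cons_val_one, Matrix.head_cons, Matrix.cons_val_zero] using Ne.symm hcls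

lemma fam_extend (hRS : IsRootSystem Φ) (hirr : IsIrreducibleRS Φ)
    (hL : finrank ℂ L = 2) (hLk : ∀ θ ∈ Φ, ¬ L ≤ kerC θ)
    {k : ℕ} (hk : 2 ≤ k) {β : Fin k → (Fin d → ℝ)} {prev : Fin k → Fin k}
    (hF : isFam Φ L k β prev) (hns : Submodule.span ℝ (Set.range β) ≠ ⊤) :
    ∃ (β' : Fin (k+1) → (Fin d → ℝ)) (prev' : Fin (k+1) → Fin (k+1)),
      isFam Φ L (k+1) β' prev' := by
  obtain ⟨hmem, hind, hprev⟩ := hF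
  set X := Submodule.span ℝ (Set.range β) with hX
  have main : ∃ τ ∈ Φ, τ ∉ X ∧ ∃ i, dotR τ (β i) ≠ 0 ∧ kerC τ ⊓ L ≠ kerC (β i) ⊓ L := by
    by_contra hcon
    push_neg at hcon
    -- first: some τ outside X non-orthogonal to some β i
    have subA : ∃ τ0 ∈ Φ, τ0 ∉ X ∧ ∃ i0, dotR τ0 (β i0) ≠ 0 := by
      by_contra hA
      push_neg at hA
      have horth : ∀ a ∈ (↑Φ : Set (Fin d → ℝ)) ∩ ↑X, ∀ b ∈ (↑Φ : Set (Fin d → ℝ)) \ ↑X,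
          dotR a b = 0 := by
        rintro a ⟨haΦ, haX⟩ b ⟨hbΦ, hbX⟩
        have hbort : ∀ i, dotR b (β i) = 0 := hA b hbΦ hbX
        have hXker : X ≤ LinearMap.ker (dotL b) := by
          rw [hX, Submodule.span_le]
          rintro x ⟨i, rfl⟩
          simp only [SetLike.mem_coe, LinearMap.mem_ker, dotL_apply]
          rw [dotR_comm]
          exact hbort i
        have : dotL b a = 0 := hXker haX
        rw [dotL_apply] at this
        exact this
      have hdisj : Disjoint ((↑Φ : Set (Fin d → ℝ)) ∩ ↑X) ((↑Φ : Set (Fin d → ℝ)) \ ↑X) :=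
        Set.disjoint_left.mpr (fun x hx hx2 => hx2.2 hx.2)
      rcases hirr _ _ (Set.inter_union_diff (Φ : Set (Fin d → ℝ)) (X : Set (Fin d → ℝ))).symm hdisj horth with hA0 | hB0
      · have hβ0 : β ⟨0, by omega⟩ ∈ (↑Φ : Set (Fin d → ℝ)) ∩ ↑X :=
          ⟨hmem _, Submodule.subset_span (Set.mem_range_self _)⟩
        rw [hA0] at hβ0
        exact hβ0
      · apply hns
        apply top_unique
        rw [← hRS.2.1]
        apply Submodule.span_le.mpr
        exact Set.diff_eq_empty.mp hB0
    obtain ⟨τ0, hτ0Φ, hτ0X, i0, hdot0⟩ := subA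
    have hcls0 : kerC τ0 ⊓ L = kerC (β i0) ⊓ L := hcon τ0 hτ0Φ hτ0X i0 hdot0
    obtain ⟨j0, hdotp, hclsp⟩ := partner hk ⟨hmem, hind, hprev⟩ i0
    by_cases hj : dotR τ0 (β j0) ≠ 0
    · exact hclsp (hcls0.symm.trans (hcon τ0 hτ0Φ hτ0X j0 hj))
    push_neg at hj
    set n := 2 * dotR τ0 (β i0) / dotR (β i0) (β i0) with hn
    have hn0 : n ≠ 0 :=
      div_ne_zero (mul_ne_zero two_ne_zero hdot0) (dotR_self_ne_zero (hRS.1 _ (hmem i0)))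
    set ρ := τ0 - n • β i0 with hρ
    have hρΦ : ρ ∈ Φ := hRS.2.2.1 (β i0) (hmem i0) τ0 hτ0Φ
    have hρX : ρ ∉ X := by
      intro h
      apply hτ0X
      have hτeq : τ0 = ρ + n • β i0 := by rw [hρ]; abel
      rw [hτeq]
      exact X.add_mem h (X.smul_mem _ (Submodule.subset_span (Set.mem_range_self i0)))
    have hdotρ : dotR ρ (β j0) ≠ 0 := by
      rw [hρ, dotR_sub_smul, hj]
      simpa using mul_ne_zero hn0 hdotp
    have h1 : kerC ρ ⊓ L = kerC (β j0) ⊓ L := hcon ρ hρΦ hρX j0 hdotρ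
    have h2 : kerC ρ ⊓ L = kerC τ0 ⊓ L :=
      fiber_sub_smul_same hL n (hLk τ0 hτ0Φ) (hLk _ (hmem i0)) (hLk ρ hρΦ) hcls0
    exact hclsp (by rw [← hcls0, ← h2, h1])
  obtain ⟨τ, hτΦ, hτX, i, hdi, hci⟩ := main
  refine ⟨Fin.snoc β τ, Fin.snoc (fun m => (prev m).castSucc) i.castSucc, ?_, ?_, ?_⟩
  · intro i'
    refine Fin.lastCases ?_ ?_ i'
    · rw [Fin.snoc_last]; exact hτΦ
    · intro m; rw [Fin.snoc_castSucc]; exact hmem m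
  · exact linearIndependent_fin_snoc.mpr ⟨hind, hτX⟩
  · intro i'
    refine Fin.lastCases ?_ ?_ i'
    · intro _
      rw [Fin.snoc_last, Fin.snoc_last]
      refine ⟨?_, ?_, ?_⟩
      · simpa using i.isLt
      · rw [Fin.snoc_castSucc]; exact hdi
      · rw [Fin.snoc_castSucc]; exact hci
    · intro m hm
      have hm' : 0 < m.val := by simpa using hm
      obtain ⟨hlt, hdot, hcls⟩ := hprev m hm'
      rw [Fin.snoc_castSucc, Fin.snoc_castSucc, Fin.snoc_castSucc]
      exact ⟨by simpa using hlt, hdot, hcls⟩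

lemma fam_spanning (hd : 2 ≤ d) (hRS : IsRootSystem Φ) (hirr : IsIrreducibleRS Φ)
    (hL : finrank ℂ L = 2) (hLk : ∀ θ ∈ Φ, ¬ L ≤ kerC θ) :
    ∃ k, 2 ≤ k ∧ ∃ (β : Fin k → (Fin d → ℝ)) (prev : Fin k → Fin k),
      isFam Φ L k β prev ∧ Submodule.span ℝ (Set.range β) = ⊤ := by
  have aux : ∀ m k (β : Fin k → (Fin d → ℝ)) (prev : Fin k → Fin k), 2 ≤ k →
      isFam Φ L k β prev → d ≤ k + m →
      ∃ k', 2 ≤ k' ∧ ∃ (β' : Fin k' → (Fin d → ℝ)) (prev' : Fin k' → Fin k'),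
        isFam Φ L k' β' prev' ∧ Submodule.span ℝ (Set.range β') = ⊤ := by
    intro m
    induction m with
    | zero =>
      intro k β prev hk hF hdk
      have hcard : Fintype.card (Fin k) = finrank ℝ (Fin d → ℝ) := by
        have hk_le : k ≤ d := by
          have := hF.2.1.fintype_card_le_finrank
          rwa [Fintype.card_fin, Module.finrank_fin_fun] at this
        rw [Fintype.card_fin, Module.finrank_fin_fun]
        omega
      haveI : Nonempty (Fin k) := ⟨⟨0, by omega⟩⟩
      have hcoe := coe_basisOfLinearIndependentOfCardEqFinrank hF.2.1 hcard
      refine ⟨k, hk, β, prev, hF, ?_⟩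
      rw [← hcoe]
      exact Basis.span_eq _
    | succ m ih =>
      intro k β prev hk hF hdk
      by_cases hsp : Submodule.span ℝ (Set.range β) = ⊤
      · exact ⟨k, hk, β, prev, hF, hsp⟩
      · obtain ⟨β', prev', hF'⟩ := fam_extend hRS hirr hL hLk hk hF hsp
        exact ih (k+1) β' prev' (by omega) hF' (by omega)
  obtain ⟨β, prev, hF⟩ := fam_two hd hRS hirr hL hLk
  exact aux d 2 β prev le_rfl hF (by omega)


open Classical in
lemma lower_bound (hd : 2 ≤ d) (hRS : IsRootSystem Φ) (hirr : IsIrreducibleRS Φ)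
    (hL : finrank ℂ L = 2) (hLk : ∀ θ ∈ Φ, ¬ L ≤ kerC θ) :
    2 * d - 1 ≤ ∑ l ∈ Φ.image (fun θ => kerC θ ⊓ L),
        finrank ℝ ↥(Submodule.span ℝ {θ : Fin d → ℝ | θ ∈ Φ ∧ kerC θ ⊓ L = l}) := by
  classical
  obtain ⟨k, hk2, β, prev, hF, hspan⟩ := fam_spanning hd hRS hirr hL hLk
  obtain ⟨hmem, hind, hprev⟩ := hF
  set Bas : Basis (Fin k) ℝ (Fin d → ℝ) := Basis.mk hind hspan.ge with hBas
  have hkd : k = d := by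
    have h1 := Module.finrank_eq_card_basis Bas
    rw [Module.finrank_fin_fun, Fintype.card_fin] at h1
    omega
  -- reflection roots along tree edges
  set nn : Fin k → ℝ := fun i => 2 * dotR (β i) (β (prev i)) / dotR (β (prev i)) (β (prev i))
    with hnn
  set γ : Fin k → (Fin d → ℝ) := fun i => β i - nn i • β (prev i) with hγ
  have hγΦ : ∀ i : Fin k, γ i ∈ Φ := fun i =>
    hRS.2.2.1 (β (prev i)) (hmem _) (β i) (hmem i)
  have hn0 : ∀ i : Fin k, 0 < i.val → nn i ≠ 0 := by
    intro i hi
    exact div_ne_zero (mul_ne_zero two_ne_zero (hprev i hi).2.1)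
      (dotR_self_ne_zero (hRS.1 _ (hmem (prev i))))
  have hγcross : ∀ i : Fin k, 0 < i.val →
      kerC (γ i) ⊓ L ≠ kerC (β i) ⊓ L ∧ kerC (γ i) ⊓ L ≠ kerC (β (prev i)) ⊓ L := by
    intro i hi
    exact fiber_sub_smul_cross hL (hn0 i hi) (hLk _ (hmem i)) (hLk _ (hmem (prev i)))
      (hLk _ (hγΦ i)) (hprev i hi).2.2
  -- repr computations
  have hreprβ : ∀ i : Fin k, Bas.repr (β i) = Finsupp.single i 1 := by
    intro i
    have : β i = Bas i := (Basis.mk_apply hind hspan.ge i).symm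
    rw [this, Basis.repr_self]
  have hreprγ : ∀ i : Fin k,
      Bas.repr (γ i) = Finsupp.single i 1 - nn i • Finsupp.single (prev i) 1 := by
    intro i
    rw [hγ]
    simp only [map_sub, map_smul, hreprβ]
  have hβ_at : ∀ i m : Fin k, Bas.repr (β i) m = if i = m then 1 else 0 := by
    intro i m
    rw [hreprβ, Finsupp.single_apply]
  have hγ_at : ∀ i m : Fin k,
      Bas.repr (γ i) m = (if i = m then 1 else 0) - nn i * (if prev i = m then 1 else 0) := by
    intro i m
    rw [hreprγ]
    simp [Finsupp.sub_apply, Finsupp.smul_apply, Finsupp.single_apply]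
  -- the 2k-1 index type
  set vec : Fin k ⊕ {i : Fin k // 0 < i.val} → (Fin d → ℝ) :=
    Sum.elim β (fun j => γ j.1) with hvec
  set lead : Fin k ⊕ {i : Fin k // 0 < i.val} → Fin k := Sum.elim id (fun j => j.1) with hlead
  have hvecΦ : ∀ x : Fin k ⊕ {i : Fin k // 0 < i.val}, vec x ∈ Φ := by
    rintro (i | j)
    · exact hmem i
    · exact hγΦ j.1
  have hlead1 : ∀ x : Fin k ⊕ {i : Fin k // 0 < i.val}, Bas.repr (vec x) (lead x) = 1 := by
    rintro (i | j)
    · simp [hvec, hlead, hβ_at]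
    · have hne : prev j.1 ≠ j.1 := by
        have := (hprev j.1 j.2).1
        intro h
        rw [h] at this
        omega
      simp [hvec, hlead, hγ_at, hne]
  have hlead0 : ∀ x : Fin k ⊕ {i : Fin k // 0 < i.val}, ∀ m : Fin k, (lead x).val < m.val → Bas.repr (vec x) m = 0 := by
    rintro (i | j) m hm
    · simp only [hlead, Sum.elim_inl, id] at hm
      have hne : i ≠ m := fun h => by rw [h] at hm; omega
      simp [hvec, hβ_at, hne]
    · have h1 : j.1 ≠ m := fun h => by
        rw [hlead] at hm
        simp only [Sum.elim_inr] at hm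
        rw [h] at hm
        omega
      have h2 : prev j.1 ≠ m := by
        have := (hprev j.1 j.2).1
        rw [hlead] at hm
        simp only [Sum.elim_inr] at hm
        intro h
        rw [h] at this
        omega
      simp [hvec, hγ_at, h1, h2]
  have hinj : ∀ x y : Fin k ⊕ {i : Fin k // 0 < i.val}, lead x = lead y →
      kerC (vec x) ⊓ L = kerC (vec y) ⊓ L → x = y := by
    rintro (i | j) (i' | j') hl hc
    · simp only [hlead, Sum.elim_inl, id] at hl
      rw [hl]
    · exfalso
      simp only [hlead, Sum.elim_inl, Sum.elim_inr, id] at hl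
      subst hl
      simp only [hvec, Sum.elim_inl, Sum.elim_inr] at hc
      exact (hγcross j'.1 j'.2).1 hc.symm
    · exfalso
      simp only [hlead, Sum.elim_inl, Sum.elim_inr, id] at hl
      rw [← hl] at hc
      simp only [hvec, Sum.elim_inl, Sum.elim_inr] at hc
      exact (hγcross j.1 j.2).1 hc
    · simp only [hlead, Sum.elim_inr] at hl
      rw [Subtype.ext hl]
  -- triangular independence over any lead-injective finite set
  have tri : ∀ (N : ℕ) (t : Finset (Fin k ⊕ {i : Fin k // 0 < i.val})), t.card ≤ N →
      (∀ x ∈ t, ∀ y ∈ t, lead x = lead y → x = y) →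
      ∀ g : Fin k ⊕ {i : Fin k // 0 < i.val} → ℝ, ∑ x ∈ t, g x • vec x = 0 → ∀ x ∈ t, g x = 0 := by
    intro N
    induction N with
    | zero =>
      intro t ht _ g _ x hx
      rw [Finset.card_eq_zero.mp (Nat.le_zero.mp ht)] at hx
      exact absurd hx (Finset.notMem_empty x)
    | succ N ih =>
      intro t ht hinjt g hsum x hx
      have hne : t.Nonempty := ⟨x, hx⟩
      obtain ⟨xm, hxs, hmax⟩ := Finset.exists_max_image t (fun y => (lead y).val) hne
      have hgxm : g xm = 0 := by
        have h0 := congrArg (fun v : (Fin d → ℝ) => (Bas.repr v) (lead xm)) hsum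
        simp only [map_sum, map_smul, Finsupp.finset_sum_apply, Finsupp.smul_apply,
          smul_eq_mul, map_zero, Finsupp.coe_zero, Pi.zero_apply] at h0
        rw [Finset.sum_eq_single_of_mem xm hxs ?_] at h0
        · rw [hlead1 xm] at h0
          simpa using h0
        · intro y hy hyne
          have hlt : (lead y).val < (lead xm).val := by
            rcases lt_or_eq_of_le (hmax y hy) with h | h
            · exact h
            · exact absurd (hinjt y hy xm hxs (Fin.val_injective h)) hyne
          rw [hlead0 y (lead xm) hlt, mul_zero]
      rcases eq_or_ne x xm with rfl | hxne
      · exact hgxm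
      · have hsum' : ∑ y ∈ t.erase xm, g y • vec y = 0 := by
          have h4 : g xm • vec xm + ∑ y ∈ t.erase xm, g y • vec y = 0 := by
            rw [Finset.add_sum_erase t (fun y => g y • vec y) hxs]
            exact hsum
          rw [hgxm, zero_smul, zero_add] at h4
          exact h4
        exact ih (t.erase xm) (by rw [Finset.card_erase_of_mem hxs]; omega)
          (fun a ha b hb => hinjt a (Finset.mem_of_mem_erase ha) b (Finset.mem_of_mem_erase hb))
          g hsum' x (Finset.mem_erase.mpr ⟨hxne, hx⟩)
  -- per-fiber cardinality bound
  have card_le : ∀ l : Submodule ℂ (Fin d → ℂ),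
      (Finset.univ.filter (fun x : Fin k ⊕ {i : Fin k // 0 < i.val} => kerC (vec x) ⊓ L = l)).card ≤
      finrank ℝ ↥(Submodule.span ℝ {θ : Fin d → ℝ | θ ∈ Φ ∧ kerC θ ⊓ L = l}) := by
    intro l
    set sfin := Finset.univ.filter (fun x : Fin k ⊕ {i : Fin k // 0 < i.val} => kerC (vec x) ⊓ L = l) with hsfin
    set W := Submodule.span ℝ {θ : Fin d → ℝ | θ ∈ Φ ∧ kerC θ ⊓ L = l} with hW
    have hmemW : ∀ x, x ∈ sfin → vec x ∈ W := by
      intro x hx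
      exact Submodule.subset_span ⟨hvecΦ x, (Finset.mem_filter.mp hx).2⟩
    have hli : LinearIndependent ℝ (fun y : {x // x ∈ sfin} => vec y.1) := by
      rw [linearIndependent_iff']
      intro t g hsum xx hxx
      set G : Fin k ⊕ {i : Fin k // 0 < i.val} → ℝ := fun x => if h : x ∈ sfin then (if ⟨x, h⟩ ∈ t then g ⟨x, h⟩ else 0) else 0
        with hG
      set t' := t.image Subtype.val with ht'
      have hsum2 : ∑ x ∈ t', G x • vec x = 0 := by
        rw [ht', Finset.sum_image (fun a _ b _ h => Subtype.ext h)]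
        rw [← hsum]
        apply Finset.sum_congr rfl
        intro y hy
        congr 1
        rw [hG]
        simp only [y.2, dif_pos]
        rw [if_pos]
        exact hy
      have hinjt' : ∀ a ∈ t', ∀ b ∈ t', lead a = lead b → a = b := by
        intro a ha b hb hl
        have haf : a ∈ sfin := by
          obtain ⟨ya, _, rfl⟩ := Finset.mem_image.mp ha
          exact ya.2
        have hbf : b ∈ sfin := by
          obtain ⟨yb, _, rfl⟩ := Finset.mem_image.mp hb
          exact yb.2
        exact hinj a b hl (((Finset.mem_filter.mp haf).2).trans ((Finset.mem_filter.mp hbf).2).symm)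
      have hall0 := tri t'.card t' le_rfl hinjt' G hsum2
      have : G xx.1 = 0 := hall0 xx.1 (Finset.mem_image_of_mem _ hxx)
      rw [hG] at this
      simp only [xx.2, dif_pos] at this
      rwa [if_pos (by simpa using hxx)] at this
    have hli' : LinearIndependent ℝ (fun y : {x // x ∈ sfin} =>
        (⟨vec y.1, hmemW y.1 y.2⟩ : W)) := by
      apply LinearIndependent.of_comp W.subtype
      exact hli
    have := hli'.fintype_card_le_finrank
    rwa [Fintype.card_coe] at this
  -- assemble
  have hfib : ∀ x : Fin k ⊕ {i : Fin k // 0 < i.val}, kerC (vec x) ⊓ L ∈ Φ.image (fun θ => kerC θ ⊓ L) := fun x =>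
    Finset.mem_image_of_mem _ (hvecΦ x)
  have hcount : (Finset.univ : Finset (Fin k ⊕ {i : Fin k // 0 < i.val})).card =
      ∑ l ∈ Φ.image (fun θ => kerC θ ⊓ L),
        (Finset.univ.filter (fun x : Fin k ⊕ {i : Fin k // 0 < i.val} => kerC (vec x) ⊓ L = l)).card :=
    Finset.card_eq_sum_card_fiberwise (fun x _ => hfib x)
  have hcardI : (Finset.univ : Finset (Fin k ⊕ {i : Fin k // 0 < i.val})).card = k + (k - 1) := by
    rw [Finset.card_univ, Fintype.card_sum, Fintype.card_fin]
    congr 1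
    have h2 : Fintype.card {i : Fin k // i.val = 0} = 1 := by
      rw [Fintype.card_eq_one_iff]
      refine ⟨⟨⟨0, by omega⟩, rfl⟩, ?_⟩
      rintro ⟨j, hj⟩
      apply Subtype.ext
      apply Fin.ext
      simpa using hj
    have h3 : Fintype.card {i : Fin k // ¬ (i.val = 0)} = k - 1 := by
      rw [Fintype.card_subtype_compl, Fintype.card_fin, h2]
    rw [← h3]
    apply Fintype.card_congr
    apply Equiv.subtypeEquivRight
    intro i
    omega
  have hsum_le : ∑ l ∈ Φ.image (fun θ => kerC θ ⊓ L),
      (Finset.univ.filter (fun x : Fin k ⊕ {i : Fin k // 0 < i.val} => kerC (vec x) ⊓ L = l)).card ≤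
      ∑ l ∈ Φ.image (fun θ => kerC θ ⊓ L),
        finrank ℝ ↥(Submodule.span ℝ {θ : Fin d → ℝ | θ ∈ Φ ∧ kerC θ ⊓ L = l}) :=
    Finset.sum_le_sum (fun l _ => card_le l)
  omega


open Classical in
lemma upper_bound (hRS : IsRootSystem Φ) :
    2 * (∑ l ∈ Φ.image (fun θ => kerC θ ⊓ L),
        finrank ℝ ↥(Submodule.span ℝ {θ : Fin d → ℝ | θ ∈ Φ ∧ kerC θ ⊓ L = l})) ≤ Φ.card := by
  classical
  have hfib : ∀ θ ∈ Φ, kerC θ ⊓ L ∈ Φ.image (fun θ => kerC θ ⊓ L) := fun θ h =>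
    Finset.mem_image_of_mem _ h
  have hcount : Φ.card = ∑ l ∈ Φ.image (fun θ => kerC θ ⊓ L),
      (Φ.filter (fun θ => kerC θ ⊓ L = l)).card :=
    Finset.card_eq_sum_card_fiberwise hfib
  rw [hcount, Finset.mul_sum]
  apply Finset.sum_le_sum
  intro l _
  set S := Φ.filter (fun θ => kerC θ ⊓ L = l) with hS
  have hsetS : {θ : Fin d → ℝ | θ ∈ Φ ∧ kerC θ ⊓ L = l} = (S : Set (Fin d → ℝ)) := by
    ext x
    simp [hS, Finset.mem_filter]
  rw [hsetS]
  apply two_mul_finrank_le_card S.card S le_rfl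
  · intro h0
    have h0Φ := (Finset.mem_filter.mp h0).1
    exact hRS.1 0 h0Φ rfl
  · intro x hx
    obtain ⟨hxΦ, hxl⟩ := Finset.mem_filter.mp hx
    refine Finset.mem_filter.mpr ⟨neg_mem_of_mem hRS hxΦ, ?_⟩
    rw [kerC_neg]
    exact hxl

end Stmt14Aux

open Classical in
/-- For a simply-laced (ADE) irreducible root system `Φ` of rank `d ≥ 2`
and the `L`-induced decomposition `Φ = Φ_1 ⊔ ⋯ ⊔ Φ_s`, with `r_k = dim_ℝ span_ℝ Φ_k`, one
has `2d − 1 ≤ Σ r_k ≤ (1/2)·#Φ`. -/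
theorem stmt14 {d : ℕ} (hd : 2 ≤ d) (Φ : Finset (Fin d → ℝ))
    (hRS : IsRootSystem Φ) (hred : IsReducedRS Φ) (hirr : IsIrreducibleRS Φ)
    (hADE : ∀ α ∈ Φ, ∀ β ∈ Φ, dotR α α = dotR β β)
    (L : Submodule ℂ (Fin d → ℂ)) (hL : Module.finrank ℂ L = 2)
    (hLk : ∀ θ ∈ Φ, ¬ L ≤ kerC θ) :
    2 * d - 1 ≤ ∑ l ∈ Φ.image (fun θ => kerC θ ⊓ L),
        Module.finrank ℝ
          ↥(Submodule.span ℝ {θ : Fin d → ℝ | θ ∈ Φ ∧ kerC θ ⊓ L = l}) ∧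
    2 * (∑ l ∈ Φ.image (fun θ => kerC θ ⊓ L),
        Module.finrank ℝ
          ↥(Submodule.span ℝ {θ : Fin d → ℝ | θ ∈ Φ ∧ kerC θ ⊓ L = l})) ≤ Φ.card := by
  constructor
  · exact Stmt14Aux.lower_bound hd hRS hirr hL hLk
  · exact Stmt14Aux.upper_bound hRS

end
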